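/- arXiv:2601.23151 — 3 statements merged into one kernel-verified Lean document; each statement's English description precedes it below -/
import Mathlib

section
/- Let (Ω, 𝔽, ℙ) be a probability space, let k be a positive natural number, let σ > 0, and let N : Ω → EuclideanSpace ℝ (Fin k) be a random vector whose coordinates N₁, …, N_k are independent Gaussian random variables with mean 0 and variance σ². Then for every real r ≥ 0, ℙ(‖N‖ ≥ r) ≤ 2^{k/2} · exp(−r²/(4σ²)). -/
open MeasureTheory ProbabilityTheory Real

lemma gauss_pdf_mul (σ : ℝ) (hσ : 0 < σ) (x : ℝ) :
    gaussianPDFReal 0 ⟨σ ^ 2, sq_nonneg σ⟩ x * rexp ((4 * σ ^ 2)⁻¹ * x ^ 2)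
      = (Real.sqrt (2 * π * σ ^ 2))⁻¹ * rexp (-(4 * σ ^ 2)⁻¹ * x ^ 2) := by
  show (√(2 * π * σ ^ 2))⁻¹ * rexp (-(x - 0) ^ 2 / (2 * σ ^ 2)) * rexp ((4 * σ ^ 2)⁻¹ * x ^ 2) = _
  push_cast
  rw [mul_assoc, ← Real.exp_add]
  congr 1
  have : (σ:ℝ)^2 ≠ 0 := by positivity
  field_simp
  ring

lemma gauss_int_aux (σ : ℝ) (hσ : 0 < σ) :
    Integrable (fun x => rexp ((4 * σ ^ 2)⁻¹ * x ^ 2))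
        (gaussianReal 0 ⟨σ ^ 2, sq_nonneg σ⟩) ∧
      ∫ x, rexp ((4 * σ ^ 2)⁻¹ * x ^ 2) ∂(gaussianReal 0 ⟨σ ^ 2, sq_nonneg σ⟩)
        = Real.sqrt 2 := by
  have hv : (⟨σ ^ 2, sq_nonneg σ⟩ : NNReal) ≠ 0 := by
    simp [← NNReal.coe_ne_zero]
    positivity
  have hb : (0:ℝ) < (4 * σ ^ 2)⁻¹ := by positivity
  have hrw : gaussianReal 0 ⟨σ ^ 2, sq_nonneg σ⟩
      = volume.withDensity (fun x => ((gaussianPDFReal 0 ⟨σ ^ 2, sq_nonneg σ⟩ x).toNNReal : ENNReal)) := by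
    rw [gaussianReal_of_var_ne_zero 0 hv]
    rfl
  have hmeas : Measurable (fun x => (gaussianPDFReal 0 ⟨σ ^ 2, sq_nonneg σ⟩ x).toNNReal) :=
    (measurable_gaussianPDFReal 0 _).real_toNNReal
  have hptw : ∀ x : ℝ, (gaussianPDFReal 0 ⟨σ ^ 2, sq_nonneg σ⟩ x).toNNReal
      • rexp ((4 * σ ^ 2)⁻¹ * x ^ 2)
      = (Real.sqrt (2 * π * σ ^ 2))⁻¹ * rexp (-(4 * σ ^ 2)⁻¹ * x ^ 2) := by
    intro x
    rw [NNReal.smul_def, smul_eq_mul, Real.coe_toNNReal _ (gaussianPDFReal_nonneg 0 (⟨σ ^ 2, sq_nonneg σ⟩ : NNReal) x),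
      gauss_pdf_mul σ hσ]
  have hint : Integrable (fun x : ℝ => (Real.sqrt (2 * π * σ ^ 2))⁻¹
      * rexp (-(4 * σ ^ 2)⁻¹ * x ^ 2)) := by
    exact (integrable_exp_neg_mul_sq hb).const_mul _
  constructor
  · rw [hrw, integrable_withDensity_iff_integrable_smul hmeas]
    exact hint.congr (by filter_upwards with x using (hptw x).symm)
  · rw [hrw, integral_withDensity_eq_integral_smul hmeas]
    simp_rw [hptw]
    rw [integral_const_mul, integral_gaussian]
    have h1 : π / (4 * σ ^ 2)⁻¹ = 2 * (2 * π * σ ^ 2) := by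
      field_simp; ring
    rw [h1, Real.sqrt_mul (by norm_num : (0:ℝ) ≤ 2) (2 * π * σ ^ 2)]
    have h2 : Real.sqrt (2 * π * σ ^ 2) ≠ 0 := by
      refine ne_of_gt (Real.sqrt_pos.mpr ?_)
      positivity
    field_simp

/-- Gaussian tail bound (Lemma C.3): if `N` is a random vector in `EuclideanSpace ℝ (Fin k)`
whose coordinates are independent centered Gaussians of variance `σ²`, then for every `r ≥ 0`,
`ℙ(‖N‖ ≥ r) ≤ 2 ^ (k/2) * exp (-r² / (4σ²))`. -/
theorem stmt3 {Ω : Type*} [MeasureSpace Ω] [IsProbabilityMeasure (ℙ : Measure Ω)]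
    (k : ℕ) (hk : 0 < k) (σ : ℝ) (hσ : 0 < σ)
    (N : Ω → EuclideanSpace ℝ (Fin k)) (hNmeas : Measurable N)
    (hindep : iIndepFun (fun i ω => N ω i) ℙ)
    (hlaw : ∀ i, Measure.map (fun ω => N ω i) ℙ = gaussianReal 0 ⟨σ ^ 2, sq_nonneg σ⟩)
    (r : ℝ) (hr : 0 ≤ r) :
    ℙ {ω | r ≤ ‖N ω‖} ≤
      ENNReal.ofReal (2 ^ ((k : ℝ) / 2) * Real.exp (-(r ^ 2) / (4 * σ ^ 2))) := by
  set t : ℝ := (4 * σ ^ 2)⁻¹ with ht_def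
  have ht : 0 ≤ t := by positivity
  set X : Fin k → Ω → ℝ := fun i ω => (N ω i) ^ 2 with hX_def
  have hNi : ∀ i, Measurable (fun ω => N ω i) := fun i =>
    (measurable_pi_apply i).comp ((WithLp.measurable_ofLp 2 _).comp hNmeas)
  have hXmeas : ∀ i, Measurable (X i) := fun i => (hNi i).pow_const 2
  have hXindep : iIndepFun X ℙ :=
    hindep.comp (fun _ x => x ^ 2) (fun _ => measurable_id.pow_const 2)
  -- per-coordinate integrability and mgf
  have hint_i : ∀ i, Integrable (fun ω => rexp (t * X i ω)) ℙ := by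
    intro i
    have h1 : AEStronglyMeasurable (fun x : ℝ => rexp (t * x ^ 2))
        (Measure.map (fun ω => N ω i) ℙ) :=
      (Real.continuous_exp.comp (continuous_const.mul (continuous_pow 2))).aestronglyMeasurable
    have := (integrable_map_measure h1 (hNi i).aemeasurable).mp ?_
    · exact this
    · rw [hlaw i]
      exact (gauss_int_aux σ hσ).1
  have hmgf_i : ∀ i, mgf (X i) ℙ t = Real.sqrt 2 := by
    intro i
    rw [mgf]
    have h1 : AEStronglyMeasurable (fun x : ℝ => rexp (t * x ^ 2))
        (Measure.map (fun ω => N ω i) ℙ) :=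
      (Real.continuous_exp.comp (continuous_const.mul (continuous_pow 2))).aestronglyMeasurable
    calc ∫ ω, rexp (t * X i ω) ∂ℙ
        = ∫ x, rexp (t * x ^ 2) ∂(Measure.map (fun ω => N ω i) ℙ) :=
          (integral_map (hNi i).aemeasurable h1).symm
      _ = Real.sqrt 2 := by
          rw [hlaw i]
          exact (gauss_int_aux σ hσ).2
  -- the sum
  have hint_sum : Integrable (fun ω => rexp (t * (∑ i, X i) ω)) ℙ :=
    hXindep.integrable_exp_mul_sum hXmeas (fun i _ => hint_i i)
  have hmgf_sum : mgf (∑ i, X i) ℙ t = Real.sqrt 2 ^ k := by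
    rw [hXindep.mgf_sum hXmeas]
    simp [hmgf_i]
  have chernoff := measure_ge_le_exp_mul_mgf (μ := ℙ) (X := ∑ i, X i) (r ^ 2) ht hint_sum
  -- set equality
  have hset : {ω | r ≤ ‖N ω‖} = {ω | r ^ 2 ≤ (∑ i, X i) ω} := by
    ext ω
    have hnorm : ‖N ω‖ ^ 2 = (∑ i, X i) ω := by
      simp only [Finset.sum_apply, hX_def]
      rw [EuclideanSpace.norm_eq, Real.sq_sqrt (by positivity)]
      congr 1
      ext i
      rw [Real.norm_eq_abs, sq_abs]
    simp only [Set.mem_setOf_eq, ← hnorm]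
    constructor
    · intro h; exact pow_le_pow_left₀ hr h 2
    · intro h
      have := Real.sqrt_le_sqrt h
      rwa [Real.sqrt_sq hr, Real.sqrt_sq (norm_nonneg _)] at this
  rw [hset]
  have hfin : ℙ {ω | r ^ 2 ≤ (∑ i, X i) ω} ≠ ⊤ := measure_ne_top _ _
  rw [← ENNReal.ofReal_toReal hfin]
  apply ENNReal.ofReal_le_ofReal
  refine chernoff.trans (le_of_eq ?_)
  rw [hmgf_sum]
  rw [mul_comm]
  congr 1
  · rw [show (2:ℝ) ^ ((k:ℝ)/2) = ((2:ℝ) ^ ((1:ℝ)/2)) ^ (k:ℕ) by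
      rw [← Real.rpow_natCast ((2:ℝ) ^ ((1:ℝ)/2)) k, ← Real.rpow_mul (by norm_num)]
      congr 1; ring]
    rw [← Real.sqrt_eq_rpow]
  · congr 1
    rw [ht_def]
    field_simp
end

section
/- Let (Ω, 𝔽, ℙ) be a probability space, let k be a positive natural number, let σ > 0, and let N : Ω → EuclideanSpace ℝ (Fin k) be a random vector whose coordinates are independent Gaussian random variables with mean 0 and variance σ². Then for every real r ≥ 0, E[‖N‖ · 1_{‖N‖ ≥ r}] ≤ σ · √k · 2^{k/4} · exp(−r²/(8σ²)). -/
open MeasureTheory ProbabilityTheory Real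

lemma sq_exp_integrable {b : ℝ} (hb : 0 < b) :
    Integrable (fun x : ℝ => x ^ 2 * rexp (-b * x ^ 2)) := by
  refine Integrable.mono' ((integrable_exp_neg_mul_sq (half_pos hb)).const_mul (2 / b))
    ((measurable_id.pow_const 2).mul
      (((measurable_id.pow_const 2).const_mul (-b)).exp)).aestronglyMeasurable
    (Filter.Eventually.of_forall fun x => ?_)
  have h1 : x ^ 2 ≤ 2 / b * rexp (b / 2 * x ^ 2) := by
    have h2 := Real.add_one_le_exp (b / 2 * x ^ 2)
    have hx : x ^ 2 = 2 / b * (b / 2 * x ^ 2) := by field_simp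
    calc x ^ 2 = 2 / b * (b / 2 * x ^ 2) := hx
      _ ≤ 2 / b * rexp (b / 2 * x ^ 2) := by gcongr; linarith [h2]
  have h3 : rexp (b / 2 * x ^ 2) * rexp (-b * x ^ 2) = rexp (-(b / 2) * x ^ 2) := by
    rw [← Real.exp_add]
    congr 1
    ring
  rw [Real.norm_of_nonneg (by positivity)]
  calc x ^ 2 * rexp (-b * x ^ 2) ≤ (2 / b * rexp (b / 2 * x ^ 2)) * rexp (-b * x ^ 2) := by
        gcongr
    _ = 2 / b * rexp (-(b / 2) * x ^ 2) := by rw [mul_assoc, h3]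

lemma integral_sq_exp {b : ℝ} (hb : 0 < b) :
    ∫ x : ℝ, x ^ 2 * rexp (-b * x ^ 2) = Real.sqrt (π / b) / (2 * b) := by
  have hderiv : ∀ x : ℝ, HasDerivAt (fun x : ℝ => x * rexp (-b * x ^ 2))
      (rexp (-b * x ^ 2) - 2 * b * (x ^ 2 * rexp (-b * x ^ 2))) x := by
    intro x
    have h1 : HasDerivAt (fun x : ℝ => -b * x ^ 2) (-b * (2 * x)) x := by
      simpa using ((hasDerivAt_pow 2 x).const_mul (-b))
    have h2 := (h1.exp)
    have h3 := (hasDerivAt_id x).fun_mul h2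
    refine h3.congr_deriv ?_
    simp only [id_eq]
    ring
  have hint : Integrable (fun x : ℝ =>
      rexp (-b * x ^ 2) - 2 * b * (x ^ 2 * rexp (-b * x ^ 2))) :=
    (integrable_exp_neg_mul_sq hb).sub ((sq_exp_integrable hb).const_mul _)
  have h0 := integral_eq_zero_of_hasDerivAt_of_integrable hderiv hint
    (integrable_mul_exp_neg_mul_sq hb)
  rw [integral_sub (integrable_exp_neg_mul_sq hb) ((sq_exp_integrable hb).const_mul _),
    integral_const_mul, integral_gaussian, sub_eq_zero] at h0
  rw [eq_div_iff (by positivity)]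
  linarith [h0]

section helpers
variable {σ : ℝ}

lemma gauss_var_ne_zero (hσ : 0 < σ) : (⟨σ ^ 2, sq_nonneg σ⟩ : NNReal) ≠ 0 := by
  intro h
  have : ((⟨σ ^ 2, sq_nonneg σ⟩ : NNReal) : ℝ) = 0 := by rw [h]; simp
  exact absurd this (by positivity)

lemma gauss_integral_eq (hσ : 0 < σ) (g : ℝ → ℝ) :
    ∫ x, g x ∂(gaussianReal 0 ⟨σ ^ 2, sq_nonneg σ⟩) =
      ∫ x, gaussianPDFReal 0 ⟨σ ^ 2, sq_nonneg σ⟩ x * g x := by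
  set v : NNReal := ⟨σ ^ 2, sq_nonneg σ⟩ with hv
  rw [gaussianReal_of_var_ne_zero 0 (gauss_var_ne_zero hσ)]
  have hd : (gaussianPDF 0 v) = fun x => ((gaussianPDFReal 0 v x).toNNReal : ENNReal) := rfl
  rw [hd, integral_withDensity_eq_integral_smul
    ((measurable_gaussianPDFReal 0 v).real_toNNReal) g]
  congr 1 with x
  rw [NNReal.smul_def, Real.coe_toNNReal _ (gaussianPDFReal_nonneg 0 v x), smul_eq_mul]

lemma gauss_integrable_iff (hσ : 0 < σ) {g : ℝ → ℝ} :
    Integrable g (gaussianReal 0 ⟨σ ^ 2, sq_nonneg σ⟩) ↔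
      Integrable (fun x => gaussianPDFReal 0 ⟨σ ^ 2, sq_nonneg σ⟩ x * g x) := by
  set v : NNReal := ⟨σ ^ 2, sq_nonneg σ⟩ with hv
  rw [gaussianReal_of_var_ne_zero 0 (gauss_var_ne_zero hσ)]
  have hd : (gaussianPDF 0 v) = fun x => ((gaussianPDFReal 0 v x).toNNReal : ENNReal) := rfl
  rw [hd, integrable_withDensity_iff_integrable_smul
    ((measurable_gaussianPDFReal 0 v).real_toNNReal)]
  refine integrable_congr (Filter.Eventually.of_forall fun x => ?_)
  simp only [NNReal.smul_def, Real.coe_toNNReal _ (gaussianPDFReal_nonneg 0 v x), smul_eq_mul]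

lemma gauss_pdf_eq (hσ : 0 < σ) (x : ℝ) :
    gaussianPDFReal 0 ⟨σ ^ 2, sq_nonneg σ⟩ x =
      (Real.sqrt (2 * π * σ ^ 2))⁻¹ * rexp (-(2 * σ ^ 2)⁻¹ * x ^ 2) := by
  have hc : ((⟨σ ^ 2, sq_nonneg σ⟩ : NNReal) : ℝ) = σ ^ 2 := rfl
  unfold gaussianPDFReal
  change (√(2 * π * σ ^ 2))⁻¹ * rexp (-(x - 0) ^ 2 / (2 * σ ^ 2)) = _
  congr 1
  congr 1
  field_simp
  ring

lemma gauss_sq_integrable (hσ : 0 < σ) :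
    Integrable (fun x : ℝ => x ^ 2) (gaussianReal 0 ⟨σ ^ 2, sq_nonneg σ⟩) := by
  rw [gauss_integrable_iff hσ]
  have h : ∀ x : ℝ, gaussianPDFReal 0 ⟨σ ^ 2, sq_nonneg σ⟩ x * x ^ 2 =
      (Real.sqrt (2 * π * σ ^ 2))⁻¹ * (x ^ 2 * rexp (-(2 * σ ^ 2)⁻¹ * x ^ 2)) := fun x => by
    rw [gauss_pdf_eq hσ]; ring
  simp_rw [h]
  exact (sq_exp_integrable (by positivity)).const_mul _

lemma gauss_integral_sq (hσ : 0 < σ) :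
    ∫ x, x ^ 2 ∂(gaussianReal 0 ⟨σ ^ 2, sq_nonneg σ⟩) = σ ^ 2 := by
  rw [gauss_integral_eq hσ]
  have h : ∀ x : ℝ, gaussianPDFReal 0 ⟨σ ^ 2, sq_nonneg σ⟩ x * x ^ 2 =
      (Real.sqrt (2 * π * σ ^ 2))⁻¹ * (x ^ 2 * rexp (-(2 * σ ^ 2)⁻¹ * x ^ 2)) := fun x => by
    rw [gauss_pdf_eq hσ]; ring
  simp_rw [h]
  have hA : Real.sqrt (2 * π * σ ^ 2) ≠ 0 := Real.sqrt_ne_zero'.mpr (by positivity)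
  rw [integral_const_mul, integral_sq_exp (by positivity),
    show π / (2 * σ ^ 2)⁻¹ = 2 * π * σ ^ 2 by rw [div_eq_mul_inv, inv_inv]; ring]
  field_simp

lemma gauss_exp_integrand (hσ : 0 < σ) (x : ℝ) :
    gaussianPDFReal 0 ⟨σ ^ 2, sq_nonneg σ⟩ x * rexp ((4 * σ ^ 2)⁻¹ * x ^ 2) =
      (Real.sqrt (2 * π * σ ^ 2))⁻¹ * rexp (-(4 * σ ^ 2)⁻¹ * x ^ 2) := by
  rw [gauss_pdf_eq hσ, mul_assoc, ← Real.exp_add]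
  congr 2
  field_simp
  ring

lemma gauss_exp_integrable (hσ : 0 < σ) :
    Integrable (fun x : ℝ => rexp ((4 * σ ^ 2)⁻¹ * x ^ 2))
      (gaussianReal 0 ⟨σ ^ 2, sq_nonneg σ⟩) := by
  rw [gauss_integrable_iff hσ]
  simp_rw [gauss_exp_integrand hσ]
  exact (integrable_exp_neg_mul_sq (by positivity)).const_mul _

lemma gauss_integral_exp (hσ : 0 < σ) :
    ∫ x, rexp ((4 * σ ^ 2)⁻¹ * x ^ 2) ∂(gaussianReal 0 ⟨σ ^ 2, sq_nonneg σ⟩) = Real.sqrt 2 := by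
  rw [gauss_integral_eq hσ]
  simp_rw [gauss_exp_integrand hσ]
  have hA : Real.sqrt (2 * π * σ ^ 2) ≠ 0 := Real.sqrt_ne_zero'.mpr (by positivity)
  rw [integral_const_mul, integral_gaussian,
    show π / (4 * σ ^ 2)⁻¹ = 2 * (2 * π * σ ^ 2) by rw [div_eq_mul_inv, inv_inv]; ring,
    Real.sqrt_mul (by norm_num : (0:ℝ) ≤ 2), mul_comm (Real.sqrt 2), ← mul_assoc,
    inv_mul_cancel₀ hA, one_mul]

end helpers

/-- Truncated first-moment bound from the proof of Corollary 4.7: if `N` is a random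
vector in `EuclideanSpace ℝ (Fin k)` whose coordinates are independent centered Gaussians
of variance `σ²`, then for every `r ≥ 0`,
`E[‖N‖ · 1_{‖N‖ ≥ r}] ≤ σ √k 2^(k/4) exp (-r² / (8σ²))`. -/
theorem stmt5 {Ω : Type*} [MeasureSpace Ω] [IsProbabilityMeasure (ℙ : Measure Ω)]
    (k : ℕ) (hk : 0 < k) (σ : ℝ) (hσ : 0 < σ)
    (N : Ω → EuclideanSpace ℝ (Fin k)) (hNmeas : Measurable N)
    (hindep : iIndepFun (fun i ω => N ω i) ℙ)
    (hlaw : ∀ i, Measure.map (fun ω => N ω i) ℙ = gaussianReal 0 ⟨σ ^ 2, sq_nonneg σ⟩)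
    (r : ℝ) (hr : 0 ≤ r) :
    ∫ ω, Set.indicator {ω | r ≤ ‖N ω‖} (fun ω => ‖N ω‖) ω ∂ℙ ≤
      σ * Real.sqrt k * 2 ^ ((k : ℝ) / 4) * Real.exp (-(r ^ 2) / (8 * σ ^ 2)) := by
  have ht0 : (0:ℝ) ≤ (4 * σ ^ 2)⁻¹ := by positivity
  set t : ℝ := (4 * σ ^ 2)⁻¹ with ht
  set X : Fin k → Ω → ℝ := fun i ω => (N ω i) ^ 2 with hX
  have hNi : ∀ i, Measurable fun ω => N ω i := fun i => (measurable_pi_apply i).comp ((WithLp.measurable_ofLp _ _).comp hNmeas)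
  have hXmeas : ∀ i, Measurable (X i) := fun i => (hNi i).pow_const 2
  -- per-coordinate facts transferred from the Gaussian law
  have hXint : ∀ i, Integrable (X i) ℙ := fun i => by
    have h1 := gauss_sq_integrable hσ
    rw [← hlaw i] at h1
    exact (integrable_map_measure (measurable_id.pow_const 2).aestronglyMeasurable
      (hNi i).aemeasurable).mp h1
  have hXval : ∀ i, ∫ ω, X i ω ∂ℙ = σ ^ 2 := fun i => by
    have h1 : ∫ x, x ^ 2 ∂(Measure.map (fun ω => N ω i) ℙ) = ∫ ω, X i ω ∂ℙ :=
      integral_map (hNi i).aemeasurable (measurable_id.pow_const 2).aestronglyMeasurable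
    rw [← h1, hlaw i, gauss_integral_sq hσ]
  have hexpint : ∀ i, Integrable (fun ω => rexp (t * X i ω)) ℙ := fun i => by
    have h1 := gauss_exp_integrable hσ
    rw [← hlaw i] at h1
    exact (integrable_map_measure
      (((measurable_id.pow_const 2).const_mul _).exp).aestronglyMeasurable
      (hNi i).aemeasurable).mp h1
  have hmgf : ∀ i, mgf (X i) ℙ t = Real.sqrt 2 := fun i => by
    have h1 : ∫ x, rexp ((4 * σ ^ 2)⁻¹ * x ^ 2) ∂(Measure.map (fun ω => N ω i) ℙ) =
        ∫ ω, rexp (t * X i ω) ∂ℙ :=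
      integral_map (hNi i).aemeasurable
        (((measurable_id.pow_const 2).const_mul _).exp).aestronglyMeasurable
    rw [mgf, ← h1, hlaw i, gauss_integral_exp hσ]
  -- independence of the squared coordinates
  have hXindep : iIndepFun X ℙ :=
    hindep.comp (fun _ => fun x : ℝ => x ^ 2) (fun _ => measurable_id.pow_const 2)
  -- the squared norm
  set S : Ω → ℝ := ∑ i, X i with hS
  have hSapp : ∀ ω, S ω = ∑ i, X i ω := fun ω => by rw [hS]; simp
  have hSnorm : ∀ ω, ‖N ω‖ ^ 2 = S ω := fun ω => by
    rw [hSapp, EuclideanSpace.norm_eq, Real.sq_sqrt (by positivity)]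
    refine Finset.sum_congr rfl fun i _ => ?_
    rw [Real.norm_eq_abs, sq_abs]
  have hSint : Integrable S ℙ :=
    (integrable_finset_sum _ (fun i _ => hXint i)).congr
      (Filter.Eventually.of_forall fun ω => (hSapp ω).symm)
  have hSval : ∫ ω, S ω ∂ℙ = k * σ ^ 2 := by
    simp_rw [hSapp]
    rw [integral_finset_sum _ (fun i _ => hXint i)]
    simp [hXval]
  have hSexpint : Integrable (fun ω => rexp (t * S ω)) ℙ :=
    hXindep.integrable_exp_mul_sum hXmeas (fun i _ => hexpint i)
  have hmgfS : mgf S ℙ t = (Real.sqrt 2) ^ k := by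
    rw [hS, hXindep.mgf_sum hXmeas]
    simp [hmgf]
  -- Chernoff bound
  have htail : (ℙ {ω | r ^ 2 ≤ S ω}).toReal ≤ rexp (-t * r ^ 2) * (Real.sqrt 2) ^ k := by
    have h1 := measure_ge_le_exp_mul_mgf (X := S) (μ := ℙ) (t := t) (r ^ 2) ht0 hSexpint
    rwa [hmgfS] at h1
  -- the event
  set A : Set Ω := {ω | r ≤ ‖N ω‖} with hA
  have hAmeas : MeasurableSet A := measurableSet_le measurable_const hNmeas.norm
  have hAeq : A = {ω | r ^ 2 ≤ S ω} := by
    ext ω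
    simp only [hA, Set.mem_setOf_eq]
    rw [← hSnorm ω]
    exact ⟨fun h => pow_le_pow_left₀ hr h 2,
      fun h => (pow_le_pow_iff_left₀ hr (norm_nonneg _) two_ne_zero).mp h⟩
  -- Cauchy-Schwarz
  have hconj : Real.HolderConjugate 2 2 := Real.HolderConjugate.two_two
  have htwo : ENNReal.ofReal (2:ℝ) = 2 := by norm_num
  have hfmeas : AEStronglyMeasurable (fun ω => ‖N ω‖) ℙ := hNmeas.norm.aestronglyMeasurable
  have hf2 : MemLp (fun ω => ‖N ω‖) (ENNReal.ofReal 2) ℙ := by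
    rw [htwo, memLp_two_iff_integrable_sq hfmeas]
    exact hSint.congr (Filter.Eventually.of_forall fun ω => (hSnorm ω).symm)
  have hg2 : MemLp (A.indicator fun _ => (1:ℝ)) (ENNReal.ofReal 2) ℙ := by
    rw [htwo]
    exact memLp_indicator_const 2 hAmeas 1 (Or.inr (measure_ne_top _ _))
  have hCS := integral_mul_le_Lp_mul_Lq_of_nonneg hconj
    (Filter.Eventually.of_forall fun ω => norm_nonneg (N ω))
    (Filter.Eventually.of_forall fun ω => Set.indicator_nonneg (fun _ _ => zero_le_one) ω)
    hf2 hg2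
  -- rewrite LHS
  have hLHS : ∫ ω, A.indicator (fun ω => ‖N ω‖) ω ∂ℙ =
      ∫ ω, ‖N ω‖ * A.indicator (fun _ => (1:ℝ)) ω ∂ℙ := by
    refine integral_congr_ae (Filter.Eventually.of_forall fun ω => ?_)
    by_cases hω : ω ∈ A <;> simp [Set.indicator_apply, hω]
  -- compute the two factors
  have hIf : ∫ ω, ‖N ω‖ ^ (2:ℝ) ∂ℙ = k * σ ^ 2 := by
    simp_rw [show (2:ℝ) = ((2:ℕ):ℝ) by norm_num, Real.rpow_natCast]
    simp_rw [hSnorm]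
    exact hSval
  have hIg : ∫ ω, (A.indicator (fun _ => (1:ℝ)) ω) ^ (2:ℝ) ∂ℙ = (ℙ A).toReal := by
    have h1 : ∀ ω, (A.indicator (fun _ => (1:ℝ)) ω) ^ (2:ℝ) =
        A.indicator (fun _ => (1:ℝ)) ω := fun ω => by
      by_cases hω : ω ∈ A <;>
        simp [Set.indicator_apply, hω, Real.zero_rpow (by norm_num : (2:ℝ) ≠ 0)]
    simp_rw [h1]
    rw [integral_indicator_const _ hAmeas]
    simp
    rfl
  -- put everything together
  have h2k : (Real.sqrt 2) ^ k = (2:ℝ) ^ ((k:ℝ) / 2) := by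
    rw [Real.sqrt_eq_rpow, ← Real.rpow_natCast ((2:ℝ) ^ ((1:ℝ)/2)) k,
      ← Real.rpow_mul (by norm_num : (0:ℝ) ≤ 2)]
    congr 1
    ring
  have hsq2 : Real.sqrt ((2:ℝ) ^ ((k:ℝ) / 2)) = (2:ℝ) ^ ((k:ℝ) / 4) := by
    rw [Real.sqrt_eq_rpow, ← Real.rpow_mul (by norm_num : (0:ℝ) ≤ 2)]
    congr 1
    ring
  have hexp2 : Real.sqrt (rexp (-t * r ^ 2)) = rexp (-(r ^ 2) / (8 * σ ^ 2)) := by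
    rw [← Real.exp_half]
    congr 1
    rw [ht]
    rw [div_eq_div_iff (by norm_num : (2:ℝ) ≠ 0) (by positivity : (8:ℝ) * σ ^ 2 ≠ 0)]
    field_simp
    ring
  calc ∫ ω, A.indicator (fun ω => ‖N ω‖) ω ∂ℙ
      = ∫ ω, ‖N ω‖ * A.indicator (fun _ => (1:ℝ)) ω ∂ℙ := hLHS
    _ ≤ (∫ a, ‖N a‖ ^ (2:ℝ) ∂ℙ) ^ ((1:ℝ)/2) *
        (∫ a, (A.indicator (fun _ => (1:ℝ)) a) ^ (2:ℝ) ∂ℙ) ^ ((1:ℝ)/2) := hCS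
    _ = Real.sqrt ((k : ℝ) * σ ^ 2) * Real.sqrt ((ℙ A).toReal) := by
        rw [hIf, hIg, ← Real.sqrt_eq_rpow, ← Real.sqrt_eq_rpow]
    _ ≤ Real.sqrt ((k : ℝ) * σ ^ 2) * Real.sqrt (rexp (-t * r ^ 2) * (Real.sqrt 2) ^ k) := by
        gcongr
        rw [hAeq]
        exact htail
    _ = σ * Real.sqrt k * 2 ^ ((k : ℝ) / 4) * Real.exp (-(r ^ 2) / (8 * σ ^ 2)) := by
        rw [Real.sqrt_mul (Nat.cast_nonneg k), Real.sqrt_sq hσ.le,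
          Real.sqrt_mul (Real.exp_nonneg _), hexp2, h2k, hsq2]
        ring
end

section
/- Let E be a real inner product space, let c ∈ E, let R > 0, let σ > 0, let z₀ ∈ E with ‖z₀ − c‖ = R, and let (Ω, 𝔽, ℙ) be a probability space. Let Z : Ω → E be a random vector with ‖Z − c‖ = R almost surely, and let G : Ω → ℝ be a random variable whose law is Gaussian with mean 0 and variance σ² (no independence from Z is assumed). Define X = Z + (G/R) • (Z − c) and let Y : Ω → E be given by Y = c + (R/‖X − c‖) • (X − c) when X ≠ c and Y = z₀ otherwise. Then for every Borel set A ⊆ E, |ℙ(Z ∈ A) − ℙ(Y ∈ A)| ≤ √2 · exp(−R²/(4σ²)). -/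
open scoped Classical

open MeasureTheory ProbabilityTheory

open scoped NNReal in
lemma gauss_tail17 (σ R : ℝ) (hσ : 0 < σ) (hR : 0 < R) :
    ((gaussianReal 0 ⟨σ ^ 2, sq_nonneg σ⟩) (Set.Iic (-R))).toReal ≤
      Real.sqrt 2 * Real.exp (-(R ^ 2) / (4 * σ ^ 2)) := by
  set v : ℝ≥0 := ⟨σ ^ 2, sq_nonneg σ⟩ with hvdef
  have hvcoe : (v : ℝ) = σ ^ 2 := rfl
  have hv : v ≠ 0 := by
    rw [← NNReal.coe_ne_zero, hvcoe]
    positivity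
  have hv2 : (2 * v : ℝ≥0) ≠ 0 := mul_ne_zero two_ne_zero hv
  have hv2coe : ((2 * v : ℝ≥0) : ℝ) = 2 * σ ^ 2 := by
    rw [NNReal.coe_mul, hvcoe]; norm_num
  rw [gaussianReal_apply_eq_integral _ hv, ENNReal.toReal_ofReal
    (setIntegral_nonneg measurableSet_Iic fun x _ => gaussianPDFReal_nonneg _ _ _)]
  set C := Real.sqrt 2 * Real.exp (-(R ^ 2) / (4 * σ ^ 2)) with hC
  have hCpos : 0 ≤ C := by positivity
  have key : ∀ x ∈ Set.Iic (-R),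
      gaussianPDFReal 0 v x ≤ C * gaussianPDFReal 0 (2 * v) x := by
    intro x hx
    simp only [Set.mem_Iic] at hx
    have hx2 : R ^ 2 ≤ x ^ 2 := by nlinarith
    simp only [gaussianPDFReal, hvcoe, hv2coe, sub_zero]
    have hs : Real.sqrt (2 * Real.pi * (2 * σ ^ 2)) =
        Real.sqrt 2 * Real.sqrt (2 * Real.pi * σ ^ 2) := by
      rw [← Real.sqrt_mul (by norm_num : (0:ℝ) ≤ 2)]
      ring_nf
    have hspos : 0 < Real.sqrt (2 * Real.pi * σ ^ 2) :=
      Real.sqrt_pos.mpr (by positivity)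
    have h2pos : (0:ℝ) < Real.sqrt 2 := by positivity
    rw [hs, hC]
    have hrw : Real.sqrt 2 * Real.exp (-(R ^ 2) / (4 * σ ^ 2)) *
        ((Real.sqrt 2 * Real.sqrt (2 * Real.pi * σ ^ 2))⁻¹ *
          Real.exp (-x ^ 2 / (2 * (2 * σ ^ 2)))) =
        (Real.sqrt (2 * Real.pi * σ ^ 2))⁻¹ *
          Real.exp (-(R ^ 2) / (4 * σ ^ 2) + -x ^ 2 / (2 * (2 * σ ^ 2))) := by
      rw [Real.exp_add]
      field_simp
    rw [hrw]
    have hexp : -x ^ 2 / (2 * σ ^ 2) ≤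
        -(R ^ 2) / (4 * σ ^ 2) + -x ^ 2 / (2 * (2 * σ ^ 2)) := by
      have h4 : (0:ℝ) < 4 * σ ^ 2 := by positivity
      rw [show (2 : ℝ) * (2 * σ ^ 2) = 4 * σ ^ 2 by ring, ← add_div,
        div_le_div_iff₀ (by positivity) h4]
      nlinarith
    exact mul_le_mul_of_nonneg_left (Real.exp_le_exp.mpr hexp) (by positivity)
  calc ∫ x in Set.Iic (-R), gaussianPDFReal 0 v x
      ≤ ∫ x in Set.Iic (-R), C * gaussianPDFReal 0 (2 * v) x := by
        refine setIntegral_mono_on (integrable_gaussianPDFReal _ _).restrict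
          (((integrable_gaussianPDFReal _ _).const_mul C).restrict) measurableSet_Iic key
    _ = C * ∫ x in Set.Iic (-R), gaussianPDFReal 0 (2 * v) x := integral_const_mul _ _
    _ ≤ C * ∫ x, gaussianPDFReal 0 (2 * v) x := by
        refine mul_le_mul_of_nonneg_left ?_ hCpos
        exact setIntegral_le_integral (integrable_gaussianPDFReal _ _)
          (Filter.Eventually.of_forall fun x => gaussianPDFReal_nonneg _ _ _)
    _ = C := by rw [integral_gaussianPDFReal_eq_one 0 hv2, mul_one]

/-- Theorem 4.6 (Total Variation Bound) instantiated for the sphere constraint manifold,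
stated setwise via the coupling `(Z, Y)`: if `Z` lies a.s. on the sphere of center `c` and
radius `R`, `G` is a centered Gaussian of variance `σ²`, `X = Z + (G/R) • (Z − c)` is the
normal perturbation of `Z`, and `Y` is the nearest-point projection of `X` onto the sphere
(set arbitrarily to `z₀` when `X = c`), then for every Borel set `A`,
`|ℙ(Z ∈ A) − ℙ(Y ∈ A)| ≤ √2 exp (−R²/(4σ²))`. -/
theorem stmt17 {E : Type*} [NormedAddCommGroup E] [InnerProductSpace ℝ E]
    [MeasurableSpace E] [BorelSpace E]
    {Ω : Type*} [MeasureSpace Ω] [IsProbabilityMeasure (ℙ : Measure Ω)]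
    (c : E) (R σ : ℝ) (hR : 0 < R) (hσ : 0 < σ)
    (z₀ : E) (hz₀ : ‖z₀ - c‖ = R)
    (Z : Ω → E) (hZmeas : Measurable Z) (hZ : ∀ᵐ ω ∂ℙ, ‖Z ω - c‖ = R)
    (G : Ω → ℝ) (hG : Measure.map G ℙ = gaussianReal 0 ⟨σ ^ 2, sq_nonneg σ⟩)
    (X : Ω → E) (hX : X = fun ω => Z ω + (G ω / R) • (Z ω - c))
    (Y : Ω → E)
    (hY : Y = fun ω =>
      if X ω ≠ c then c + (R / ‖X ω - c‖) • (X ω - c) else z₀) :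
    ∀ A : Set E, MeasurableSet A →
      |(ℙ (Z ⁻¹' A)).toReal - (ℙ (Y ⁻¹' A)).toReal| ≤
        Real.sqrt 2 * Real.exp (-(R ^ 2) / (4 * σ ^ 2)) := by
  intro A hA
  -- G is a.e. measurable
  have hGae : AEMeasurable G ℙ := by
    by_contra h
    rw [Measure.map_of_not_aemeasurable h] at hG
    have h1 : (gaussianReal 0 ⟨σ ^ 2, sq_nonneg σ⟩) Set.univ = 1 :=
      (instIsProbabilityMeasureGaussianReal 0 _).measure_univ
    rw [← hG] at h1
    simp at h1
  -- tail bound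
  have hT : (ℙ (G ⁻¹' Set.Iic (-R))).toReal ≤
      Real.sqrt 2 * Real.exp (-(R ^ 2) / (4 * σ ^ 2)) := by
    rw [← Measure.map_apply_of_aemeasurable hGae measurableSet_Iic, hG]
    exact gauss_tail17 σ R hσ hR
  -- on the good event, Y = Z
  have hYZ : ∀ ω, ‖Z ω - c‖ = R → -R < G ω → Y ω = Z ω := by
    intro ω hZω hGω
    have ht : 0 < 1 + G ω / R := by
      have : -1 < G ω / R := by rw [lt_div_iff₀ hR]; linarith
      linarith
    have hXc : X ω - c = (1 + G ω / R) • (Z ω - c) := by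
      rw [hX]
      show Z ω + (G ω / R) • (Z ω - c) - c = (1 + G ω / R) • (Z ω - c)
      rw [add_smul, one_smul]
      abel
    have hnorm : ‖X ω - c‖ = (1 + G ω / R) * R := by
      rw [hXc, norm_smul, Real.norm_eq_abs, abs_of_pos ht, hZω]
    have hXne : X ω ≠ c := by
      intro hcon
      rw [hcon, sub_self, norm_zero] at hnorm
      exact absurd hnorm.symm (by positivity)
    rw [hY]
    show (if X ω ≠ c then c + (R / ‖X ω - c‖) • (X ω - c) else z₀) = Z ω
    rw [if_pos hXne, hnorm, hXc, smul_smul]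
    have : R / ((1 + G ω / R) * R) * (1 + G ω / R) = 1 := by
      field_simp
      rw [div_self (by linarith : (0:ℝ) < R + G ω).ne']
    rw [this, one_smul, add_sub_cancel]
  -- the bad event
  set N : Set Ω := {ω | ¬ ‖Z ω - c‖ = R} ∪ G ⁻¹' Set.Iic (-R) with hNdef
  have hN0 : ℙ {ω | ¬ ‖Z ω - c‖ = R} = 0 := ae_iff.mp hZ
  have hNbound : (ℙ N).toReal ≤
      Real.sqrt 2 * Real.exp (-(R ^ 2) / (4 * σ ^ 2)) := by
    refine le_trans (ENNReal.toReal_mono (measure_ne_top _ _) ?_) hT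
    refine le_trans (measure_union_le _ _) ?_
    rw [hN0, zero_add]
  have hsub : ∀ (f g : Ω → E), (∀ ω, ‖Z ω - c‖ = R → -R < G ω → f ω = g ω) →
      f ⁻¹' A ⊆ g ⁻¹' A ∪ N := by
    intro f g hfg ω hω
    by_cases hωN : ω ∈ N
    · exact Or.inr hωN
    · left
      simp only [hNdef, Set.mem_union, Set.mem_setOf_eq, Set.mem_preimage,
        Set.mem_Iic, not_or, not_le, not_not] at hωN
      rwa [Set.mem_preimage, ← hfg ω hωN.1 hωN.2]
  have h1 : (ℙ (Z ⁻¹' A)).toReal ≤ (ℙ (Y ⁻¹' A)).toReal + (ℙ N).toReal := by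
    have hle : ℙ (Z ⁻¹' A) ≤ ℙ (Y ⁻¹' A) + ℙ N :=
      le_trans (measure_mono (hsub Z Y fun ω h1 h2 => (hYZ ω h1 h2).symm))
        (measure_union_le _ _)
    have := ENNReal.toReal_mono (by finiteness) hle
    rwa [ENNReal.toReal_add (measure_ne_top _ _) (measure_ne_top _ _)] at this
  have h2 : (ℙ (Y ⁻¹' A)).toReal ≤ (ℙ (Z ⁻¹' A)).toReal + (ℙ N).toReal := by
    have hle : ℙ (Y ⁻¹' A) ≤ ℙ (Z ⁻¹' A) + ℙ N :=
      le_trans (measure_mono (hsub Y Z hYZ)) (measure_union_le _ _)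
    have := ENNReal.toReal_mono (by finiteness) hle
    rwa [ENNReal.toReal_add (measure_ne_top _ _) (measure_ne_top _ _)] at this
  rw [abs_sub_le_iff]
  constructor <;> linarith
end
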